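/- For each infinite binary branch η, define X_η = {(ν,ξ) : η <_lex ν <_lex ξ and η ∧ ν ◁ ν ∧ ξ}, Y_η = {(ν,ξ) : η <_lex ν and (η ∧ ν ◁ ν ∧ ξ or ξ ≤_lex ν)}, and Z_η = {(ν,ξ) : ξ ≤_lex ν}. Then X_η = Y_η \ Z_η, and both Y_η and Z_η are downright closed with respect to the lexicographic order (i.e., closed under increasing the first coordinate and decreasing the second coordinate). -/

import Mathlib

/-- Strict lexicographic order on infinite binary sequences: at the first
position where they differ, `η` has the smaller value (`false < true`). -/
def lexLt (η ν : ℕ → Bool) : Prop :=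
  ∃ n, (∀ m < n, η m = ν m) ∧ η n < ν n

/-- Non-strict lexicographic order on infinite binary sequences. -/
def lexLe (η ν : ℕ → Bool) : Prop :=
  η = ν ∨ lexLt η ν

/-- The length of the longest common initial segment of two binary sequences. -/
noncomputable def meetLen (η ν : ℕ → Bool) : ℕ := sInf {n | η n ≠ ν n}

/-- The meet of two (distinct) infinite binary sequences: their longest common
finite initial segment. -/
noncomputable def meet (η ν : ℕ → Bool) : List Bool :=
  (List.range (meetLen η ν)).map η

/-- `σ` is a proper initial segment of `τ`. -/
def ProperPrefix (σ τ : List Bool) : Prop := σ <+: τ ∧ σ ≠ τ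

section Lemmas

variable {η ν ξ ν' ξ' : ℕ → Bool}

lemma meetLen_eq {n : ℕ} (h0 : ∀ m < n, η m = ν m) (h1 : η n ≠ ν n) : meetLen η ν = n := by
  unfold meetLen
  refine le_antisymm (Nat.sInf_le h1) ?_
  by_contra h
  push_neg at h
  exact (Nat.sInf_mem (⟨n, h1⟩ : Set.Nonempty {n | η n ≠ ν n})) (h0 _ h)

lemma lexLt_of {n : ℕ} (h0 : ∀ m < n, η m = ν m) (h1 : η n = false) (h2 : ν n = true) :
    lexLt η ν := ⟨n, h0, by simp [h1, h2]⟩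

lemma lexLt_spec (h : lexLt η ν) :
    (∀ m < meetLen η ν, η m = ν m) ∧ η (meetLen η ν) = false ∧ ν (meetLen η ν) = true := by
  obtain ⟨n, h0, h1⟩ := h
  have hb : η n = false ∧ ν n = true := by
    revert h1; cases hη : η n <;> cases hν : ν n <;> simp_all
  have he : meetLen η ν = n := meetLen_eq h0 (by simp [hb.1, hb.2])
  rw [he]; exact ⟨h0, hb⟩

lemma lexLt_irrefl (h : lexLt η η) : False := by
  obtain ⟨-, h1, h2⟩ := lexLt_spec h
  simp [h1] at h2

lemma meetLen_comm : meetLen η ν = meetLen ν η := by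
  unfold meetLen
  congr 1
  ext n
  exact ne_comm

lemma lexLt_asymm (h : lexLt η ν) (h' : lexLt ν η) : False := by
  obtain ⟨-, h1, h2⟩ := lexLt_spec h
  obtain ⟨-, h1', h2'⟩ := lexLt_spec h'
  rw [meetLen_comm] at h1' h2'
  rw [h1] at h2'
  exact Bool.false_ne_true h2'

lemma meetLen_spec_ne (h : η ≠ ν) :
    (∀ m < meetLen η ν, η m = ν m) ∧ η (meetLen η ν) ≠ ν (meetLen η ν) := by
  have hne : Set.Nonempty {n | η n ≠ ν n} := by
    by_contra hc
    rw [Set.not_nonempty_iff_eq_empty] at hc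
    exact h (funext fun n => by_contra fun hn => (Set.eq_empty_iff_forall_notMem.mp hc n) hn)
  constructor
  · intro m hm
    by_contra hm'
    exact (Nat.notMem_of_lt_sInf hm) hm'
  · exact Nat.sInf_mem hne

lemma lexLt_total (ν ξ : ℕ → Bool) : lexLe ν ξ ∨ lexLt ξ ν := by
  by_cases h : ν = ξ
  · exact Or.inl (Or.inl h)
  obtain ⟨h0, h1⟩ := meetLen_spec_ne h
  cases hν : ν (meetLen ν ξ) <;> cases hξ : ξ (meetLen ν ξ)
  · simp [hν, hξ] at h1
  · exact Or.inl (Or.inr (lexLt_of h0 hν hξ))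
  · refine Or.inr (lexLt_of (n := meetLen ν ξ) (fun m hm => (h0 m hm).symm) hξ hν)
  · simp [hν, hξ] at h1

lemma lexLt_trans (h : lexLt η ν) (h' : lexLt ν ξ) : lexLt η ξ := by
  obtain ⟨h0, h1, h2⟩ := lexLt_spec h
  obtain ⟨h0', h1', h2'⟩ := lexLt_spec h'
  set a := meetLen η ν
  set b := meetLen ν ξ
  rcases lt_trichotomy a b with hab | hab | hab
  · exact lexLt_of (fun m hm => (h0 m hm).trans (h0' m (hm.trans hab))) h1
      ((h0' a hab) ▸ h2)
  · rw [hab] at h2; rw [h2] at h1'; exact absurd h1' (by simp)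
  · exact lexLt_of (fun m hm => (h0 m (hm.trans hab)).trans (h0' m hm))
      ((h0 b hab) ▸ h1') h2'

lemma lexLe_trans (h : lexLe η ν) (h' : lexLe ν ξ) : lexLe η ξ := by
  rcases h with rfl | h
  · exact h'
  rcases h' with rfl | h'
  · exact Or.inr h
  exact Or.inr (lexLt_trans h h')

lemma not_lexLe_iff : ¬ lexLe ξ ν ↔ lexLt ν ξ := by
  constructor
  · intro h
    rcases lexLt_total ξ ν with h' | h'
    · exact absurd h' h
    · exact h'
  · rintro h (rfl | h')
    · exact lexLt_irrefl h
    · exact lexLt_asymm h h'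

end Lemmas

section Lemmas2
variable {η ν ξ ν' ξ' : ℕ → Bool}

lemma meet_eq_right (h : lexLt η ν) :
    meet η ν = (List.range (meetLen η ν)).map ν := by
  unfold meet
  exact List.map_congr_left (fun a ha => (lexLt_spec h).1 a (List.mem_range.mp ha))

lemma length_meet : (meet η ν).length = meetLen η ν := by simp [meet]

/-- Increasing the second branch cannot increase the meet length with a smaller branch. -/
lemma meetLen_mono_right (h1 : lexLt η ν) (h2 : lexLe ν ν') :
    lexLt η ν' ∧ meetLen η ν' ≤ meetLen η ν := by
  rcases h2 with rfl | h2
  · exact ⟨h1, le_rfl⟩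
  obtain ⟨hA, hf, ht⟩ := lexLt_spec h1
  obtain ⟨hA', hf', ht'⟩ := lexLt_spec h2
  set a := meetLen η ν with ha
  set d := meetLen ν ν' with hd
  rcases lt_trichotomy d a with hda | hda | hda
  · have hlt : lexLt η ν' :=
      lexLt_of (fun m hm => (hA m (hm.trans hda)).trans (hA' m hm)) ((hA d hda).trans hf') ht'
    have : meetLen η ν' = d :=
      meetLen_eq (fun m hm => (hA m (hm.trans hda)).trans (hA' m hm))
        (by rw [(hA d hda).trans hf', ht']; simp)
    exact ⟨hlt, this ▸ hda.le⟩
  · rw [hda] at hf'; rw [ht] at hf'; exact absurd hf' (by simp)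
  · have hlt : lexLt η ν' :=
      lexLt_of (fun m hm => (hA m hm).trans (hA' m (hm.trans hda))) hf ((hA' a hda) ▸ ht)
    have : meetLen η ν' = a :=
      meetLen_eq (fun m hm => (hA m hm).trans (hA' m (hm.trans hda)))
        (by rw [hf, (hA' a hda).symm.trans ht]; simp)
    exact ⟨hlt, this ▸ le_rfl⟩

/-- Decreasing the larger branch cannot decrease the meet length with a smaller branch. -/
lemma meetLen_mono_left (h1 : lexLt η ξ') (h2 : lexLe ξ' ξ) :
    lexLt η ξ ∧ meetLen η ξ ≤ meetLen η ξ' := by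
  rcases h2 with rfl | h2
  · exact ⟨h1, le_rfl⟩
  obtain ⟨hA, hf, ht⟩ := lexLt_spec h1
  obtain ⟨hA', hf', ht'⟩ := lexLt_spec h2
  set c := meetLen η ξ' with hc
  set d := meetLen ξ' ξ with hd
  rcases lt_trichotomy d c with hdc | hdc | hdc
  · have hlt : lexLt η ξ :=
      lexLt_of (fun m hm => (hA m (hm.trans hdc)).trans (hA' m hm)) ((hA d hdc).trans hf') ht'
    have : meetLen η ξ = d :=
      meetLen_eq (fun m hm => (hA m (hm.trans hdc)).trans (hA' m hm))
        (by rw [(hA d hdc).trans hf', ht']; simp)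
    exact ⟨hlt, this ▸ hdc.le⟩
  · rw [hdc] at hf'; rw [ht] at hf'; exact absurd hf' (by simp)
  · have hlt : lexLt η ξ :=
      lexLt_of (fun m hm => (hA m hm).trans (hA' m (hm.trans hdc))) hf ((hA' c hdc) ▸ ht)
    have : meetLen η ξ = c :=
      meetLen_eq (fun m hm => (hA m hm).trans (hA' m (hm.trans hdc)))
        (by rw [hf, (hA' c hdc).symm.trans ht]; simp)
    exact ⟨hlt, this ▸ le_rfl⟩

lemma cond_iff (hην : lexLt η ν) (ξ : ℕ → Bool) :
    (ProperPrefix (meet η ν) (meet ν ξ) ∨ lexLe ξ ν) ↔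
      ¬ (lexLt η ξ ∧ meetLen η ξ < meetLen η ν) := by
  obtain ⟨hA, hf, ht⟩ := lexLt_spec hην
  set a := meetLen η ν with ha
  constructor
  · rintro h ⟨hηξ, hc⟩
    obtain ⟨hC, hcf, hct⟩ := lexLt_spec hηξ
    set c := meetLen η ξ with hcdef
    rcases h with ⟨hpre, -⟩ | hle
    · -- proper prefix case
      have hνξ : ν ≠ ξ := by
        rintro rfl
        have : meetLen ν ν = 0 := by
          unfold meetLen; simp
        have hnil : meet ν ν = [] := by simp [meet, this]
        rw [hnil, List.prefix_nil] at hpre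
        have : (meet η ν).length = 0 := by rw [hpre]; rfl
        rw [length_meet] at this
        omega
      obtain ⟨hB, -⟩ := meetLen_spec_ne hνξ
      set b := meetLen ν ξ with hb
      have hab : a ≤ b := by
        have := hpre.length_le
        rwa [length_meet, length_meet] at this
      have h1 : ξ c = ν c := (hB c (hc.trans_le hab)).symm
      have h2 : ν c = η c := (hA c hc).symm
      rw [h1, h2, hcf] at hct
      exact absurd hct (by simp)
    · rcases hle with rfl | hle
      · exact absurd hc (lt_irrefl _)
      obtain ⟨hE, hef, het⟩ := lexLt_spec hle
      set e := meetLen ξ ν with he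
      rcases lt_trichotomy c e with hce | hce | hce
      · have h1 : ξ c = ν c := hE c hce
        rw [hct, ← hA c hc, hcf] at h1
        exact absurd h1 (by simp)
      · rw [hce] at hct; rw [hct] at hef; exact absurd hef (by simp)
      · have h1 : η e = ξ e := hC e hce
        have h2 : η e = ν e := hA e (hce.trans hc)
        rw [hef] at h1; rw [het] at h2; rw [h1] at h2; exact absurd h2 (by simp)
  · intro hn
    rcases lexLt_total ξ ν with hle | hlt
    · exact Or.inr hle
    obtain ⟨hB, hbf, hbt⟩ := lexLt_spec hlt
    set b := meetLen ν ξ with hb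
    rcases lt_trichotomy b a with hba | hba | hba
    · exfalso
      have hηξ : lexLt η ξ :=
        lexLt_of (fun m hm => (hA m (hm.trans hba)).trans (hB m hm)) ((hA b hba).trans hbf) hbt
      have hce : meetLen η ξ = b :=
        meetLen_eq (fun m hm => (hA m (hm.trans hba)).trans (hB m hm))
          (by rw [(hA b hba).trans hbf, hbt]; simp)
      exact hn ⟨hηξ, hce ▸ hba⟩
    · exfalso; rw [hba, ht] at hbf; exact absurd hbf (by simp)
    · left
      constructor
      · rw [meet_eq_right hην, meet]
        refine List.IsPrefix.map ν ?_
        have := List.take_range (n := b) (i := a)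
        rw [min_eq_left hba.le] at this
        exact this ▸ List.take_prefix a (List.range b)
      · intro heq
        have := congrArg List.length heq
        rw [length_meet, length_meet] at this
        omega

end Lemmas2

/-- Downright closed subsets of pairs of branches, with respect to the
lexicographic order: closed under increasing the first coordinate and
decreasing the second coordinate. -/
def DownrightClosedLex (S : Set ((ℕ → Bool) × (ℕ → Bool))) : Prop :=
  ∀ p ∈ S, ∀ q : (ℕ → Bool) × (ℕ → Bool), lexLe p.1 q.1 → lexLe q.2 p.2 → q ∈ S

/-- For a branch `η`, with
`X_η = {(ν,ξ) : η <_lex ν <_lex ξ ∧ η ∧ ν ◁ ν ∧ ξ}`,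
`Y_η = {(ν,ξ) : η <_lex ν ∧ (η ∧ ν ◁ ν ∧ ξ ∨ ξ ≤_lex ν)}`, and
`Z_η = {(ν,ξ) : ξ ≤_lex ν}`, we have `X_η = Y_η \ Z_η` and both `Y_η` and
`Z_η` are downright closed. -/
theorem X_eq_Y_diff_Z_and_downrightClosed (η : ℕ → Bool) :
    ({p | lexLt η p.1 ∧ lexLt p.1 p.2 ∧ ProperPrefix (meet η p.1) (meet p.1 p.2)} :
        Set ((ℕ → Bool) × (ℕ → Bool))) =
      {p | lexLt η p.1 ∧ (ProperPrefix (meet η p.1) (meet p.1 p.2) ∨ lexLe p.2 p.1)} \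
        {p | lexLe p.2 p.1} ∧
    DownrightClosedLex
      {p | lexLt η p.1 ∧ (ProperPrefix (meet η p.1) (meet p.1 p.2) ∨ lexLe p.2 p.1)} ∧
    DownrightClosedLex {p | lexLe p.2 p.1} := by
  refine ⟨?_, ?_, ?_⟩
  · ext ⟨ν, ξ⟩
    simp only [Set.mem_setOf_eq, Set.mem_diff]
    constructor
    · rintro ⟨h1, h2, h3⟩
      exact ⟨⟨h1, Or.inl h3⟩, not_lexLe_iff.mpr h2⟩
    · rintro ⟨⟨h1, h2⟩, h3⟩
      exact ⟨h1, not_lexLe_iff.mp h3, h2.resolve_right h3⟩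
  · rintro ⟨ν, ξ⟩ ⟨h1, h2⟩ ⟨ν', ξ'⟩ hν hξ
    obtain ⟨h1', ha⟩ := meetLen_mono_right h1 hν
    refine ⟨h1', ?_⟩
    rw [cond_iff h1' ξ']
    rw [cond_iff h1 ξ] at h2
    rintro ⟨hηξ', hc⟩
    obtain ⟨hηξ, hcc⟩ := meetLen_mono_left hηξ' hξ
    exact h2 ⟨hηξ, lt_of_le_of_lt hcc (hc.trans_le ha)⟩
  · rintro ⟨ν, ξ⟩ h ⟨ν', ξ'⟩ hν hξ
    exact lexLe_trans (lexLe_trans hξ h) hν
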